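/- Let T be a finite tree with positive edge weights, r ≥ 2 an integer, and let σ : V → {1,…,r} be distributed according to the r-state Poisson model D[T,r]. Let Υ = {(a₁,b₁),…,(a_υ,b_υ)} be pairs of distinct leaves such that for all distinct pairs (a,b) ≠ (a',b') in Υ, the edge sets of the paths Path(a,b) and Path(a',b') are disjoint. Then the random variables 1{σ_{a₁} = σ_{b₁}}, …, 1{σ_{a_υ} = σ_{b_υ}} are mutually independent. -/

import Mathlib

open scoped Classical
open Real

noncomputable section

namespace RAS

variable {V : Type}

/-- The canonical path (as a walk) between two vertices of a tree. -/
def tpath (G : SimpleGraph V) [DecidableEq V] (hG : G.IsTree) (u v : V) : G.Walk u v :=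
  ((Classical.choice (hG.isConnected.preconnected u v)).toPath : G.Path u v).1

/-- Tree metric: sum of edge weights along the path. -/
def tdist (G : SimpleGraph V) [DecidableEq V] (hG : G.IsTree) (w : Sym2 V → ℝ) (u v : V) : ℝ :=
  ((tpath G hG u v).edges.map w).sum

/-- Edges of the canonical path. -/
def pathEdges (G : SimpleGraph V) [DecidableEq V] (hG : G.IsTree) (u v : V) :
    List (Sym2 V) :=
  (tpath G hG u v).edges

/-- A leaf is a vertex of degree 1. -/
def IsLeaf (G : SimpleGraph V) (v : V) : Prop := (G.neighborSet v).ncard = 1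

/-- A symmetric edge factor depending on whether the endpoint states agree. -/
def agreeIf {α : Type} (σ : V → α) (A B : ℝ) : Sym2 V → ℝ :=
  Sym2.lift ⟨fun u v => if σ u = σ v then A else B, fun u v => by
    simp only []
    by_cases h : σ u = σ v
    · rw [if_pos h, if_pos h.symm]
    · rw [if_neg h, if_neg (fun hh => h hh.symm)]⟩

/-- Probability mass function of the `r`-state Poisson model on a weighted tree. -/
def poissonPMF (G : SimpleGraph V) [Fintype V] [DecidableEq V]
    (w : Sym2 V → ℝ) (r : ℕ) (σ : V → Fin r) : ℝ :=
  (r : ℝ)⁻¹ * ∏ e ∈ (Set.toFinite G.edgeSet).toFinset,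
      agreeIf σ ((r : ℝ)⁻¹ + (1 - (r : ℝ)⁻¹) * exp (-(w e)))
        ((r : ℝ)⁻¹ * (1 - exp (-(w e)))) e

/-- Probability of an event under a pmf on a finite configuration space. -/
def fprob {Ω : Type} [Fintype Ω] (p : Ω → ℝ) (A : Set Ω) : ℝ :=
  ∑ ω : Ω, if ω ∈ A then p ω else 0

end RAS

namespace AgreeProof

open SimpleGraph

/-! ### A general independence lemma for product measures -/

lemma crux {ι κ : Type} [DecidableEq ι] [Fintype ι] [Fintype κ] [Nonempty κ]
    (μ : ι → κ → ℝ) (hnorm : ∀ i, ∑ k, μ i k = 1)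
    (C : Set ι) (A B : Set (ι → κ))
    (hA : ∀ η η' : ι → κ, (∀ i ∈ C, η i = η' i) → (η ∈ A ↔ η' ∈ A))
    (hB : ∀ η η' : ι → κ, (∀ i ∉ C, η i = η' i) → (η ∈ B ↔ η' ∈ B)) :
    RAS.fprob (fun η => ∏ i, μ i (η i)) (A ∩ B) =
      RAS.fprob (fun η => ∏ i, μ i (η i)) A *
      RAS.fprob (fun η => ∏ i, μ i (η i)) B := by
  classical
  set p := Equiv.piEquivPiSubtypeProd (fun i => i ∈ C) (fun _ => κ) with hp
  set y₀ : {i // i ∉ C} → κ := fun _ => Classical.arbitrary κ with hy₀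
  set x₀ : {i // i ∈ C} → κ := fun _ => Classical.arbitrary κ with hx₀
  have hrecomb : ∀ (x : {i // i ∈ C} → κ) (y : {i // i ∉ C} → κ) (i : ι),
      p.symm (x, y) i = if h : i ∈ C then x ⟨i, h⟩ else y ⟨i, h⟩ := by
    intro x y i; rfl
  have hAx : ∀ x y, (p.symm (x, y) ∈ A) ↔ (p.symm (x, y₀) ∈ A) := by
    intro x y
    apply hA
    intro i hi
    rw [hrecomb, hrecomb, dif_pos hi, dif_pos hi]
  have hBy : ∀ x y, (p.symm (x, y) ∈ B) ↔ (p.symm (x₀, y) ∈ B) := by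
    intro x y
    apply hB
    intro i hi
    rw [hrecomb, hrecomb, dif_neg hi, dif_neg hi]
  have hP : ∀ (x : {i // i ∈ C} → κ) (y : {i // i ∉ C} → κ),
      (∏ i, μ i (p.symm (x, y) i)) =
        (∏ i : {i // i ∈ C}, μ i.1 (x i)) * ∏ i : {i // i ∉ C}, μ i.1 (y i) := by
    intro x y
    rw [← Fintype.prod_subtype_mul_prod_subtype (fun i => i ∈ C)
      (fun i => μ i (p.symm (x, y) i))]
    congr 1
    · exact Finset.prod_congr rfl fun i _ => by rw [hrecomb, dif_pos i.2]
    · exact Finset.prod_congr rfl fun i _ => by rw [hrecomb, dif_neg i.2]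
  have key : ∀ E : Set (ι → κ),
      RAS.fprob (fun η => ∏ i, μ i (η i)) E =
      ∑ x : {i // i ∈ C} → κ, ∑ y : {i // i ∉ C} → κ,
        (if p.symm (x, y) ∈ E then (1:ℝ) else 0) *
          ((∏ i : {i // i ∈ C}, μ i.1 (x i)) * ∏ i : {i // i ∉ C}, μ i.1 (y i)) := by
    intro E
    unfold RAS.fprob
    rw [← Equiv.sum_comp p.symm (fun η => if η ∈ E then ∏ i, μ i (η i) else 0),
      Fintype.sum_prod_type]
    refine Finset.sum_congr rfl fun x _ => Finset.sum_congr rfl fun y _ => ?_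
    rw [hP]
    by_cases h : p.symm (x, y) ∈ E <;> simp [h]
  have hsumy : (∑ y : {i // i ∉ C} → κ, ∏ i : {i // i ∉ C}, μ i.1 (y i)) = 1 := by
    rw [← Fintype.prod_sum]
    simp [hnorm]
  have hsumx : (∑ x : {i // i ∈ C} → κ, ∏ i : {i // i ∈ C}, μ i.1 (x i)) = 1 := by
    rw [← Fintype.prod_sum]
    simp [hnorm]
  have hfa : RAS.fprob (fun η => ∏ i, μ i (η i)) A =
      ∑ x : {i // i ∈ C} → κ,
        (if p.symm (x, y₀) ∈ A then (1:ℝ) else 0) * ∏ i : {i // i ∈ C}, μ i.1 (x i) := by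
    rw [key]
    refine Finset.sum_congr rfl fun x _ => ?_
    calc ∑ y : {i // i ∉ C} → κ,
          (if p.symm (x, y) ∈ A then (1:ℝ) else 0) *
            ((∏ i : {i // i ∈ C}, μ i.1 (x i)) * ∏ i : {i // i ∉ C}, μ i.1 (y i))
        = ∑ y : {i // i ∉ C} → κ,
            ((if p.symm (x, y₀) ∈ A then (1:ℝ) else 0) * ∏ i : {i // i ∈ C}, μ i.1 (x i)) *
              ∏ i : {i // i ∉ C}, μ i.1 (y i) := by
          refine Finset.sum_congr rfl fun y _ => ?_
          rw [if_congr (hAx x y) rfl rfl]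
          ring
      _ = ((if p.symm (x, y₀) ∈ A then (1:ℝ) else 0) * ∏ i : {i // i ∈ C}, μ i.1 (x i)) *
            ∑ y : {i // i ∉ C} → κ, ∏ i : {i // i ∉ C}, μ i.1 (y i) := by
          rw [← Finset.mul_sum]
      _ = _ := by rw [hsumy, mul_one]
  have hfb : RAS.fprob (fun η => ∏ i, μ i (η i)) B =
      ∑ y : {i // i ∉ C} → κ,
        (if p.symm (x₀, y) ∈ B then (1:ℝ) else 0) * ∏ i : {i // i ∉ C}, μ i.1 (y i) := by
    rw [key, Finset.sum_comm]
    refine Finset.sum_congr rfl fun y _ => ?_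
    calc ∑ x : {i // i ∈ C} → κ,
          (if p.symm (x, y) ∈ B then (1:ℝ) else 0) *
            ((∏ i : {i // i ∈ C}, μ i.1 (x i)) * ∏ i : {i // i ∉ C}, μ i.1 (y i))
        = ∑ x : {i // i ∈ C} → κ,
            ((if p.symm (x₀, y) ∈ B then (1:ℝ) else 0) * ∏ i : {i // i ∉ C}, μ i.1 (y i)) *
              ∏ i : {i // i ∈ C}, μ i.1 (x i) := by
          refine Finset.sum_congr rfl fun x _ => ?_
          rw [if_congr (hBy x y) rfl rfl]
          ring
      _ = ((if p.symm (x₀, y) ∈ B then (1:ℝ) else 0) * ∏ i : {i // i ∉ C}, μ i.1 (y i)) *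
            ∑ x : {i // i ∈ C} → κ, ∏ i : {i // i ∈ C}, μ i.1 (x i) := by
          rw [← Finset.mul_sum]
      _ = _ := by rw [hsumx, mul_one]
  rw [key (A ∩ B), hfa, hfb, Finset.sum_mul_sum]
  refine Finset.sum_congr rfl fun x _ => Finset.sum_congr rfl fun y _ => ?_
  have hiff : (p.symm (x, y) ∈ A ∩ B) ↔
      ((p.symm (x, y₀) ∈ A) ∧ (p.symm (x₀, y) ∈ B)) := by
    rw [Set.mem_inter_iff, hAx x y, hBy x y]
  by_cases h1 : p.symm (x, y₀) ∈ A <;> by_cases h2 : p.symm (x₀, y) ∈ B <;>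
    simp [hiff, h1, h2] <;> ring

/-! ### Tree combinatorics -/

variable {V : Type} [Fintype V] [DecidableEq V] (G : SimpleGraph V) (hG : G.IsTree)

/-- A root of the tree. -/
def rho : V := Classical.choice hG.isConnected.nonempty

/-- The parent of a vertex (itself for the root). -/
def par (v : V) : V := (RAS.tpath G hG v (rho G hG)).getVert 1

/-- Depth: distance to the root. -/
def dth (v : V) : ℕ := (RAS.tpath G hG v (rho G hG)).length

lemma tpath_isPath (u v : V) : (RAS.tpath G hG u v).IsPath :=
  ((Classical.choice (hG.isConnected.preconnected u v)).toPath).2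

lemma tpath_eq {u v : V} (q : G.Walk u v) (hq : q.IsPath) : q = RAS.tpath G hG u v := by
  have := hG.IsAcyclic.path_unique ⟨q, hq⟩ ⟨RAS.tpath G hG u v, tpath_isPath G hG u v⟩
  exact congrArg Subtype.val this

lemma tpath_self (v : V) : RAS.tpath G hG v v = SimpleGraph.Walk.nil := by
  have := SimpleGraph.Path.loop_eq (⟨RAS.tpath G hG v v, tpath_isPath G hG v v⟩ : G.Path v v)
  exact congrArg Subtype.val this

lemma par_rho : par G hG (rho G hG) = rho G hG := by
  unfold par
  rw [tpath_self]
  rfl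

lemma tpath_cons {v : V} (hv : v ≠ rho G hG) :
    ∃ h : G.Adj v (par G hG v),
      RAS.tpath G hG v (rho G hG) =
        SimpleGraph.Walk.cons h (RAS.tpath G hG (par G hG v) (rho G hG)) := by
  have hnil : ¬ (RAS.tpath G hG v (rho G hG)).Nil := by
    intro h
    rw [SimpleGraph.Walk.nil_iff_length_eq] at h
    exact hv (SimpleGraph.Walk.eq_of_length_eq_zero h)
  obtain ⟨u, hadj, q, hq⟩ := SimpleGraph.Walk.not_nil_iff.mp hnil
  have hu : par G hG v = u := by
    unfold par
    rw [hq, SimpleGraph.Walk.getVert_cons_succ, SimpleGraph.Walk.getVert_zero]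
  subst hu
  have hqp : q.IsPath := by
    have := tpath_isPath G hG v (rho G hG)
    rw [hq, SimpleGraph.Walk.cons_isPath_iff] at this
    exact this.1
  exact ⟨hadj, by rw [hq, tpath_eq G hG q hqp]⟩

lemma adj_par {v : V} (hv : v ≠ rho G hG) : G.Adj v (par G hG v) :=
  (tpath_cons G hG hv).choose

lemma dth_par {v : V} (hv : v ≠ rho G hG) :
    dth G hG v = dth G hG (par G hG v) + 1 := by
  obtain ⟨h, heq⟩ := tpath_cons G hG hv
  unfold dth
  rw [heq, SimpleGraph.Walk.length_cons]

lemma par_of_adj {u v : V} (h : G.Adj u v) (hd : dth G hG v ≤ dth G hG u) :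
    par G hG u = v := by
  set P := RAS.tpath G hG v (rho G hG) with hP
  have hPp : P.IsPath := tpath_isPath G hG v (rho G hG)
  by_cases hu : u ∈ P.support
  · exfalso
    have hq : P.dropUntil u hu = RAS.tpath G hG u (rho G hG) :=
      tpath_eq G hG _ (hPp.dropUntil hu)
    have h1 : dth G hG u ≤ dth G hG v := by
      have := SimpleGraph.Walk.length_dropUntil_le P hu
      rw [hq] at this
      exact this
    have heq : dth G hG u = dth G hG v := le_antisymm h1 hd
    have hlen : (P.takeUntil u hu).length = 0 := by
      have hspec := congrArg SimpleGraph.Walk.length (P.take_spec hu)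
      rw [SimpleGraph.Walk.length_append, hq] at hspec
      have e1 : dth G hG u = (RAS.tpath G hG u (rho G hG)).length := rfl
      have e2 : dth G hG v = P.length := rfl
      omega
    exact (G.ne_of_adj h).symm (SimpleGraph.Walk.eq_of_length_eq_zero hlen)
  · have hcons : (SimpleGraph.Walk.cons h P).IsPath := by
      rw [SimpleGraph.Walk.cons_isPath_iff]
      exact ⟨hPp, hu⟩
    have := tpath_eq G hG _ hcons
    unfold par
    rw [← this, SimpleGraph.Walk.getVert_cons_succ, SimpleGraph.Walk.getVert_zero]

lemma ne_rho_of_par {u v : V} (h : G.Adj u v) (hp : par G hG u = v) : u ≠ rho G hG := by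
  intro he
  rw [he, par_rho] at hp
  exact G.ne_of_adj h (by rw [← hp, he])

lemma adj_par_or {u v : V} (h : G.Adj u v) :
    (u ≠ rho G hG ∧ par G hG u = v) ∨ (v ≠ rho G hG ∧ par G hG v = u) := by
  rcases le_total (dth G hG v) (dth G hG u) with hd | hd
  · have hp := par_of_adj G hG h hd
    exact Or.inl ⟨ne_rho_of_par G hG h hp, hp⟩
  · have hp := par_of_adj G hG h.symm hd
    exact Or.inr ⟨ne_rho_of_par G hG h.symm hp, hp⟩

/-! ### Change of variables -/

variable (r : ℕ) [NeZero r]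

/-- The difference coordinates. -/
def Phi (σ : V → Fin r) (v : V) : Fin r :=
  if v = rho G hG then σ (rho G hG) else σ v - σ (par G hG v)

lemma Phi_injective : Function.Injective (Phi G hG r) := by
  intro σ τ h
  funext v
  have H : ∀ n v, dth G hG v = n → σ v = τ v := by
    intro n
    induction n using Nat.strong_induction_on with
    | _ n ih =>
      intro v hv
      by_cases hρ : v = rho G hG
      · have := congrFun h v
        simp only [Phi, if_pos hρ] at this
        rw [hρ]
        exact this
      · have h1 := congrFun h v
        simp only [Phi, if_neg hρ] at h1
        have h2 : σ (par G hG v) = τ (par G hG v) := by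
          have hd := dth_par G hG hρ
          exact ih (dth G hG (par G hG v)) (by omega) _ rfl
        rw [h2] at h1
        exact sub_left_inj.mp h1
  exact H (dth G hG v) v rfl

/-- `Phi` as an equivalence. -/
def PhiE : (V → Fin r) ≃ (V → Fin r) :=
  Equiv.ofBijective _ (Finite.injective_iff_bijective.mp (Phi_injective G hG r))

lemma Phi_PhiE_symm (η : V → Fin r) : Phi G hG r ((PhiE G hG r).symm η) = η :=
  (PhiE G hG r).apply_symm_apply η

/-- The per-vertex factor. -/
def mu (w : Sym2 V → ℝ) (v : V) (k : Fin r) : ℝ :=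
  if v = rho G hG then (r : ℝ)⁻¹
  else if k = 0 then (r : ℝ)⁻¹ + (1 - (r : ℝ)⁻¹) * Real.exp (-(w s(v, par G hG v)))
  else (r : ℝ)⁻¹ * (1 - Real.exp (-(w s(v, par G hG v))))

lemma mu_norm (w : Sym2 V → ℝ) (hr : 2 ≤ r) (v : V) :
    ∑ k : Fin r, mu G hG r w v k = 1 := by
  have hr0 : (r : ℝ) ≠ 0 := Nat.cast_ne_zero.mpr (by omega)
  by_cases hρ : v = rho G hG
  · simp only [mu, if_pos hρ, Finset.sum_const, Finset.card_univ, Fintype.card_fin,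
      nsmul_eq_mul]
    exact mul_inv_cancel₀ hr0
  · simp only [mu, if_neg hρ]
    set A := (r : ℝ)⁻¹ + (1 - (r : ℝ)⁻¹) * Real.exp (-(w s(v, par G hG v))) with hA
    set B := (r : ℝ)⁻¹ * (1 - Real.exp (-(w s(v, par G hG v)))) with hB
    have hsum : ∑ k : Fin r, (if k = 0 then A else B) = A + ((r : ℝ) - 1) * B := by
      rw [Finset.sum_ite, Finset.filter_eq', if_pos (Finset.mem_univ _)]
      rw [Finset.filter_not, Finset.filter_eq', if_pos (Finset.mem_univ _)]
      rw [Finset.sum_const, Finset.sum_const, Finset.card_singleton,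
        Finset.card_sdiff_of_subset (by simp), Finset.card_univ, Fintype.card_fin]
      rw [Finset.card_singleton, one_smul, nsmul_eq_mul]
      rw [Nat.cast_sub (by omega), Nat.cast_one]
    rw [hsum, hA, hB]
    field_simp
    ring

/-- The pmf is a product of per-vertex factors of the difference coordinates. -/
lemma pmf_eq (w : Sym2 V → ℝ) (σ : V → Fin r) :
    RAS.poissonPMF G w r σ = ∏ v, mu G hG r w v (Phi G hG r σ v) := by
  rw [← Finset.mul_prod_erase Finset.univ _ (Finset.mem_univ (rho G hG))]
  unfold RAS.poissonPMF
  congr 1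
  · simp [mu]
  · refine (Finset.prod_bij (fun v hv => s(v, par G hG v)) ?_ ?_ ?_ ?_).symm
    · intro v hv
      rw [Set.Finite.mem_toFinset]
      exact adj_par G hG (Finset.mem_erase.mp hv).1
    · intro v₁ hv₁ v₂ hv₂ he
      have h1 := (Finset.mem_erase.mp hv₁).1
      have h2 := (Finset.mem_erase.mp hv₂).1
      rw [Sym2.eq_iff] at he
      rcases he with ⟨h, _⟩ | ⟨ha, hb⟩
      · exact h
      · exfalso
        have d1 := dth_par G hG h1
        have d2 := dth_par G hG h2
        rw [hb] at d1
        rw [← ha] at d2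
        omega
    · intro e he
      rw [Set.Finite.mem_toFinset] at he
      induction e using Sym2.ind with
      | _ u v =>
        rw [SimpleGraph.mem_edgeSet] at he
        rcases adj_par_or G hG he with ⟨hne, hp⟩ | ⟨hne, hp⟩
        · exact ⟨u, Finset.mem_erase.mpr ⟨hne, Finset.mem_univ _⟩, by simp only [hp]⟩
        · exact ⟨v, Finset.mem_erase.mpr ⟨hne, Finset.mem_univ _⟩,
            by simp only [hp]; exact Sym2.eq_swap⟩
    · intro v hv
      have hρ := (Finset.mem_erase.mp hv).1
      simp only [mu, Phi, if_neg hρ, RAS.agreeIf, Sym2.lift_mk]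
      by_cases hs : σ v = σ (par G hG v)
      · rw [if_pos (sub_eq_zero.mpr hs), if_pos hs]
      · rw [if_neg (mt sub_eq_zero.mp hs), if_neg hs]

include hG in
lemma pmf_total (w : Sym2 V → ℝ) (hr : 2 ≤ r) :
    ∑ σ : V → Fin r, RAS.poissonPMF G w r σ = 1 := by
  have : ∀ σ : V → Fin r, RAS.poissonPMF G w r σ =
      (fun η => ∏ v, mu G hG r w v (η v)) (PhiE G hG r σ) :=
    fun σ => pmf_eq G hG r w σ
  rw [Finset.sum_congr rfl fun σ _ => this σ,
    Equiv.sum_comp (PhiE G hG r) (fun η => ∏ v, mu G hG r w v (η v)),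
    ← Fintype.prod_sum]
  simp [mu_norm G hG r w hr]

/-- Transfer of independence through the change of variables. -/
lemma indep (w : Sym2 V → ℝ) (hr : 2 ≤ r) (C : Set V) (A B : Set (V → Fin r))
    (hA : ∀ σ τ : V → Fin r, (∀ v ∈ C, Phi G hG r σ v = Phi G hG r τ v) → (σ ∈ A ↔ τ ∈ A))
    (hB : ∀ σ τ : V → Fin r, (∀ v ∉ C, Phi G hG r σ v = Phi G hG r τ v) → (σ ∈ B ↔ τ ∈ B)) :
    RAS.fprob (RAS.poissonPMF G w r) (A ∩ B) =
      RAS.fprob (RAS.poissonPMF G w r) A * RAS.fprob (RAS.poissonPMF G w r) B := by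
  haveI : Nonempty (Fin r) := ⟨0⟩
  have transfer : ∀ X : Set (V → Fin r),
      RAS.fprob (RAS.poissonPMF G w r) X =
        RAS.fprob (fun η => ∏ v, mu G hG r w v (η v)) {η | (PhiE G hG r).symm η ∈ X} := by
    intro X
    unfold RAS.fprob
    rw [← Equiv.sum_comp (PhiE G hG r).symm
      (fun σ => if σ ∈ X then RAS.poissonPMF G w r σ else 0)]
    refine Finset.sum_congr rfl fun η _ => ?_
    have hv : RAS.poissonPMF G w r ((PhiE G hG r).symm η) = ∏ v, mu G hG r w v (η v) := by
      rw [pmf_eq G hG r w ((PhiE G hG r).symm η), Phi_PhiE_symm G hG r η]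
    exact if_congr Iff.rfl hv rfl
  rw [transfer, transfer, transfer]
  have hAB : {η | (PhiE G hG r).symm η ∈ A ∩ B} =
      {η | (PhiE G hG r).symm η ∈ A} ∩ {η | (PhiE G hG r).symm η ∈ B} := rfl
  rw [hAB]
  apply crux (mu G hG r w) (mu_norm G hG r w hr) C

  · intro η η' hη
    apply hA
    intro v hv
    rw [Phi_PhiE_symm, Phi_PhiE_symm]
    exact hη v hv
  · intro η η' hη
    apply hB
    intro v hv
    rw [Phi_PhiE_symm, Phi_PhiE_symm]
    exact hη v hv

/-- Telescoping along a walk. -/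
lemma telescope (σ : V → Fin r) {x y : V} (p : G.Walk x y) :
    σ x - σ y = (p.darts.map (fun d => σ d.fst - σ d.snd)).sum := by
  induction p with
  | nil => simp
  | cons h q ih =>
    rw [SimpleGraph.Walk.darts_cons, List.map_cons, List.sum_cons, ← ih]
    abel

end AgreeProof

theorem agreement_independence
    {V : Type} [Fintype V] [DecidableEq V] (G : SimpleGraph V) (hG : G.IsTree)
    (w : Sym2 V → ℝ) (hw : ∀ e ∈ G.edgeSet, 0 < w e)
    (r : ℕ) (hr : 2 ≤ r)
    (υ : ℕ) (a b : Fin υ → V)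
    (hleaf : ∀ i, RAS.IsLeaf G (a i) ∧ RAS.IsLeaf G (b i))
    (hne : ∀ i, a i ≠ b i)
    (hdisj : ∀ i j, i ≠ j →
      List.Disjoint (RAS.pathEdges G hG (a i) (b i)) (RAS.pathEdges G hG (a j) (b j))) :
    ∀ S : Finset (Fin υ),
      RAS.fprob (RAS.poissonPMF G w r) {σ : V → Fin r | ∀ i ∈ S, σ (a i) = σ (b i)} =
        ∏ i ∈ S, RAS.fprob (RAS.poissonPMF G w r) {σ : V → Fin r | σ (a i) = σ (b i)} := by
  haveI : NeZero r := ⟨by omega⟩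
  classical
  open AgreeProof in
  set ρ := AgreeProof.rho G hG with hρ
  set C : Fin υ → Set V :=
    fun i => {v | v ≠ ρ ∧ s(v, AgreeProof.par G hG v) ∈ RAS.pathEdges G hG (a i) (b i)}
    with hC
  -- dependence of the agreement event on the path coordinates
  have dep : ∀ (i : Fin υ) (σ τ : V → Fin r),
      (∀ v ∈ C i, AgreeProof.Phi G hG r σ v = AgreeProof.Phi G hG r τ v) →
      (σ (a i) = σ (b i) ↔ τ (a i) = τ (b i)) := by
    intro i σ τ hst
    have key : σ (a i) - σ (b i) = τ (a i) - τ (b i) := by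
      rw [AgreeProof.telescope G r σ (RAS.tpath G hG (a i) (b i)),
        AgreeProof.telescope G r τ (RAS.tpath G hG (a i) (b i))]
      congr 1
      apply List.map_congr_left
      intro d hd
      have hedge : d.edge ∈ RAS.pathEdges G hG (a i) (b i) :=
        List.mem_map_of_mem hd
      have hadj : G.Adj d.fst d.snd := d.adj
      have hedge1 : s(d.fst, d.snd) = d.edge := rfl
      rcases AgreeProof.adj_par_or G hG hadj with ⟨hne', hp⟩ | ⟨hne', hp⟩
      · have hc : d.fst ∈ C i := ⟨hne', by rw [hp, hedge1]; exact hedge⟩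
        have := hst d.fst hc
        simp only [AgreeProof.Phi, if_neg hne'] at this
        rw [hp] at this
        exact this
      · have hc : d.snd ∈ C i := by
          refine ⟨hne', ?_⟩
          rw [hp]
          rw [show s(d.snd, d.fst) = d.edge from by rw [← hedge1]; exact Sym2.eq_swap]
          exact hedge
        have := hst d.snd hc
        simp only [AgreeProof.Phi, if_neg hne'] at this
        rw [hp] at this
        have := congrArg Neg.neg this
        simpa [neg_sub] using this
    constructor
    · intro h
      have : τ (a i) - τ (b i) = 0 := by rw [← key, sub_eq_zero]; exact h
      exact sub_eq_zero.mp this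
    · intro h
      have : σ (a i) - σ (b i) = 0 := by rw [key, sub_eq_zero]; exact h
      exact sub_eq_zero.mp this
  -- disjointness of the coordinate sets
  have Cdisj : ∀ i j, i ≠ j → ∀ v, v ∈ C i → v ∉ C j := by
    intro i j hij v hvi hvj
    exact hdisj i j hij hvi.2 hvj.2
  intro S
  induction S using Finset.induction_on with
  | empty =>
    simp only [Finset.notMem_empty, false_implies, implies_true, Set.setOf_true,
      Finset.prod_empty]
    unfold RAS.fprob
    simp only [Set.mem_univ, if_true]
    exact AgreeProof.pmf_total G hG r w hr
  | insert j S hj ih =>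
    rw [Finset.prod_insert hj, ← ih]
    have hsplit : {σ : V → Fin r | ∀ i ∈ insert j S, σ (a i) = σ (b i)} =
        {σ : V → Fin r | σ (a j) = σ (b j)} ∩ {σ : V → Fin r | ∀ i ∈ S, σ (a i) = σ (b i)} := by
      ext σ
      simp only [Set.mem_setOf_eq, Set.mem_inter_iff, Finset.mem_insert]
      constructor
      · intro h
        exact ⟨h j (Or.inl rfl), fun i hi => h i (Or.inr hi)⟩
      · rintro ⟨h1, h2⟩ i hi
        rcases hi with rfl | hi
        · exact h1
        · exact h2 i hi
    rw [hsplit]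
    apply AgreeProof.indep G hG r w hr (C j)
    · intro σ τ h
      exact dep j σ τ h
    · intro σ τ h
      simp only [Set.mem_setOf_eq]
      refine forall₂_congr fun i hi => ?_
      apply dep i
      intro v hv
      apply h
      exact Cdisj i j (fun he => hj (he ▸ hi)) v hv
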